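/- arXiv:2008.08506 — 2 statements merged into one kernel-verified Lean document; each statement's English description precedes it below -/
import Mathlib

section
/- For every k ≥ 2, let v = s_{2k}·b (so |v| = F_{2k}+1 and v^rev = b·b·a·x_{2k}). The conjugates of v^rev that begin with the letter b are exactly the F_{2k-2}+1 lexicographically largest conjugates, the smallest of them being b·a·x_{2k}·b; moreover, the suffix of bwt(v^rev) of length F_{2k-2}+1 equals b·a^{F_{2k-2}}. -/
namespace BWT

/-- The two-letter ordered alphabet `{a, b}` with `a < b`, encoded as `Bool` with `a = false`. -/
abbrev Letter := Bool

/-- The letter `a`. -/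
abbrev la : Letter := false

/-- The letter `b`. -/
abbrev lb : Letter := true

/-- A (binary) word. -/
abbrev Word := List Letter

/-- All conjugates (rotations) of a word, listed by rotation amount. -/
def rotations (w : Word) : List Word := (List.range w.length).map w.rotate

/-- A word is primitive if all of its `|w|` conjugates are distinct. -/
def Primitive (w : Word) : Prop := (rotations w).Nodup

/-- The conjugates of `w`, sorted lexicographically. -/
def sortedRotations (w : Word) : List Word := (rotations w).insertionSort (· ≤ ·)

/-- The Burrows–Wheeler transform: last letters of the lexicographically sorted conjugates. -/
def bwt (w : Word) : Word := (sortedRotations w).map (fun u => u.getLastD la)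

/-- Number of maximal equal-letter runs of a word. -/
def runs (w : Word) : ℕ := (w.destutter (· ≠ ·)).length

/-- `r(w)`: the number of runs of the BWT of `w`. -/
def rr (w : Word) : ℕ := runs (bwt w)

/-- The runs-ratio `ρ(w)`. -/
def rho (w : Word) : ℚ :=
  max ((rr w : ℚ) / (rr w.reverse : ℚ)) ((rr w.reverse : ℚ) / (rr w : ℚ))

/-- `n`-th power (concatenation) of a word. -/
def wpow (w : Word) : ℕ → Word
  | 0 => []
  | n + 1 => w ++ wpow w n

/-- Standard words for the directive sequence `d`:
`s 0 = b`, `s 1 = a`, `s (i+2) = (s (i+1))^(d i) · s i`. -/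
def std (d : ℕ → ℕ) : ℕ → Word
  | 0 => [lb]
  | 1 => [la]
  | n + 2 => wpow (std d (n + 1)) (d n) ++ std d n

/-- Fibonacci words: `s 0 = b`, `s 1 = a`, `s (i+2) = s (i+1) · s i`. -/
def fw : ℕ → Word
  | 0 => [lb]
  | 1 => [la]
  | n + 2 => fw (n + 1) ++ fw n

/-- Fibonacci numbers with `F 0 = F 1 = 1`. -/
def fib : ℕ → ℕ
  | 0 => 1
  | 1 => 1
  | n + 2 => fib (n + 1) + fib n

/-- The word `x i`, i.e. the Fibonacci word of order `i` with its last two letters removed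
(so that `s_{2k} = x_{2k}·ab` and `s_{2k+1} = x_{2k+1}·ba`). -/
def x (i : ℕ) : Word := (fw i).take ((fw i).length - 2)

/-- `u` is a circular factor of `w`: a prefix of some conjugate of `w`. -/
def CircFactor (u w : Word) : Prop := ∃ i < w.length, u <+: w.rotate i

/-- A circular factor `u` is left-special in `w` if both `a·u` and `b·u` are circular factors. -/
def LeftSpecial (u w : Word) : Prop := CircFactor (la :: u) w ∧ CircFactor (lb :: u) w

/-- Number of occurrences of `u` as a circular factor of `w`. -/
def occ (u w : Word) : ℕ :=
  ((List.range w.length).filter (fun j => decide (u <+: w.rotate j))).length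

end BWT

namespace BWT

/-! ### basic -/

def t (n : ℕ) : Word := if n % 2 = 0 then [la, lb] else [lb, la]

def c (n : ℕ) : Word := la :: (x n ++ [lb])

lemma t_add_two (n : ℕ) : t (n + 2) = t n := by simp [t, Nat.add_mod_right]

lemma t_even (n : ℕ) (h : n % 2 = 0) : t n = [la, lb] := by simp [t, h]

lemma t_odd (n : ℕ) (h : n % 2 = 1) : t n = [lb, la] := by simp [t, h]

lemma fib_pos (n : ℕ) : 0 < fib n := by
  induction n using Nat.twoStepInduction with
  | zero => exact Nat.one_pos
  | one => exact Nat.one_pos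
  | more n ih1 ih2 => simp only [fib]; omega

lemma fib_two_le (n : ℕ) : 2 ≤ fib (n + 2) := by
  have h1 := fib_pos (n + 1); have h2 := fib_pos n
  simp only [fib]; omega

lemma fw_len (n : ℕ) : (fw n).length = fib n := by
  induction n using Nat.twoStepInduction with
  | zero => rfl
  | one => rfl
  | more n ih1 ih2 => simp [fw, fib, ih1, ih2]

lemma take_sub_two (y : Word) (p q : Letter) :
    (y ++ [p, q]).take ((y ++ [p, q]).length - 2) = y := by
  have : (y ++ [p, q]).length - 2 = y.length := by simp
  rw [this, List.take_left]

lemma x_eq_of_fw_eq {n : ℕ} {y : Word} {p q : Letter} (h : fw n = y ++ [p, q]) :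
    x n = y := by rw [x, h, take_sub_two]

/-- Main structural recursion (proved by two-step induction). -/
lemma qlem (n : ℕ) : x (n + 3) = fw (n + 1) ++ x (n + 2) ∧ fw (n + 3) = x (n + 3) ++ t (n + 3) := by
  induction n using Nat.twoStepInduction with
  | zero => exact ⟨rfl, rfl⟩
  | one => exact ⟨rfl, rfl⟩
  | more n ih1 ih2 =>
    have h1 : fw (n + 5) = fw (n + 3) ++ (fw (n + 2) ++ fw (n + 3)) := by
      show fw (n + 4) ++ fw (n + 3) = _
      show fw (n + 3) ++ fw (n + 2) ++ fw (n + 3) = _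
      simp [List.append_assoc]
    have h2 : fw (n + 5) = (fw (n + 3) ++ x (n + 4)) ++ t (n + 3) := by
      rw [h1, ih1.2, ih2.1]
      simp [List.append_assoc]
    have ht : t (n + 3) = t (n + 5) := (t_add_two (n + 3)).symm
    rw [ht] at h2
    have hx : x (n + 5) = fw (n + 3) ++ x (n + 4) := by
      rcases Nat.even_or_odd (n + 5) with he | ho
      · rw [t_even _ (Nat.even_iff.mp he)] at h2
        exact x_eq_of_fw_eq h2
      · rw [t_odd _ (Nat.odd_iff.mp ho)] at h2
        exact x_eq_of_fw_eq h2
    exact ⟨hx, by rw [hx, ← h2]⟩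

lemma fw_decomp (n : ℕ) : fw (n + 2) = x (n + 2) ++ t (n + 2) := by
  cases n with
  | zero => rfl
  | succ m => exact (qlem m).2

lemma x_rec (n : ℕ) : x (n + 3) = fw (n + 1) ++ x (n + 2) := (qlem n).1

lemma x_alt1 (n : ℕ) : x (n + 4) = x (n + 2) ++ t (n + 2) ++ x (n + 3) := by
  have h1 : x (n + 4) = fw (n + 2) ++ x (n + 3) := x_rec (n + 1)
  have h2 : fw (n + 2) = x (n + 2) ++ t (n + 2) := fw_decomp n
  rw [h1, h2]

lemma x_alt2 (n : ℕ) : x (n + 4) = x (n + 3) ++ t (n + 3) ++ x (n + 2) := by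
  have e2 : fw (n + 2) = x (n + 2) ++ t (n + 2) := fw_decomp n
  have e3 : fw (n + 3) = x (n + 3) ++ t (n + 3) := fw_decomp (n + 1)
  have e4 : fw (n + 4) = x (n + 4) ++ t (n + 4) := fw_decomp (n + 2)
  have h1 : fw (n + 4) = fw (n + 3) ++ fw (n + 2) := rfl
  rw [e2, e3, e4] at h1
  have h2 : x (n + 4) ++ t (n + 2) = (x (n + 3) ++ t (n + 3) ++ x (n + 2)) ++ t (n + 2) := by
    rw [show t (n + 2 + 2) = t (n + 2) from t_add_two (n + 2)] at h1
    rw [h1]; simp [List.append_assoc]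
  rcases Nat.even_or_odd (n + 2) with he | ho
  · rw [t_even _ (Nat.even_iff.mp he)] at h2
    exact List.append_cancel_right h2
  · rw [t_odd _ (Nat.odd_iff.mp ho)] at h2
    exact List.append_cancel_right h2

lemma t_reverse (n : ℕ) : (t (n + 1)).reverse = t n := by
  rcases Nat.even_or_odd n with he | ho
  · have h := Nat.even_iff.mp he
    rw [t_even _ h, t_odd (n+1) (by omega)]; rfl
  · have h := Nat.odd_iff.mp ho
    rw [t_odd _ h, t_even (n+1) (by omega)]; rfl

lemma pal (n : ℕ) : (x (n + 2)).reverse = x (n + 2) := by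
  induction n using Nat.twoStepInduction with
  | zero => rfl
  | one => rfl
  | more n ih1 ih2 =>
    have ih2' : List.reverse (x (n + 3)) = x (n + 3) := ih2
    rw [x_alt2 n]
    simp only [List.reverse_append, ih1, ih2', t_reverse (n + 2)]
    rw [← List.append_assoc, ← x_alt1 n]
    exact x_alt2 n

lemma c_rec_even (m : ℕ) : c (2 * m + 4) = c (2 * m + 3) ++ c (2 * m + 2) := by
  have hx : x (2 * m + 4) = x (2 * m + 3) ++ [lb, la] ++ x (2 * m + 2) := by
    rw [x_alt2 (2 * m), t_odd (2 * m + 3) (by omega)]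
  simp [c, hx, List.append_assoc]

lemma c_rec_odd (m : ℕ) : c (2 * m + 5) = c (2 * m + 3) ++ c (2 * m + 4) := by
  have hx : x (2 * m + 5) = x (2 * m + 3) ++ [lb, la] ++ x (2 * m + 4) := by
    rw [x_alt1 (2 * m + 1), t_odd (2 * m + 3) (by omega)]
  simp [c, hx, List.append_assoc]

lemma x_len (n : ℕ) : (x n).length = fib n - 2 := by
  simp [x, fw_len]

lemma c_len (n : ℕ) : (c (n + 2)).length = fib (n + 2) := by
  have := fib_two_le n
  simp [c, x_len]; omega

/-! ### strict lexicographic comparison witnessed by a position -/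

def SLt (u v : Word) : Prop :=
  ∃ p, u.take p = v.take p ∧ u[p]? = some la ∧ v[p]? = some lb

lemma SLt.lt_length {u v : Word} (h : SLt u v) :
    ∃ p, p < u.length ∧ p < v.length ∧ u.take p = v.take p ∧ u[p]? = some la ∧ v[p]? = some lb := by
  obtain ⟨p, h1, h2, h3⟩ := h
  exact ⟨p, (List.getElem?_eq_some_iff.mp h2).1, (List.getElem?_eq_some_iff.mp h3).1, h1, h2, h3⟩

lemma SLt.append {u v : Word} (h : SLt u v) (u' v' : Word) : SLt (u ++ u') (v ++ v') := by
  obtain ⟨p, hpu, hpv, h1, h2, h3⟩ := h.lt_length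
  refine ⟨p, ?_, ?_, ?_⟩
  · rw [List.take_append_of_le_length (le_of_lt hpu), List.take_append_of_le_length (le_of_lt hpv), h1]
  · rw [List.getElem?_append_left hpu]; exact h2
  · rw [List.getElem?_append_left hpv]; exact h3

lemma SLt.append_right {u v : Word} (h : SLt u v) (v' : Word) : SLt u (v ++ v') := by
  have := h.append [] v'
  simpa using this

lemma SLt.prepend {u v : Word} (h : SLt u v) (y : Word) : SLt (y ++ u) (y ++ v) := by
  obtain ⟨p, h1, h2, h3⟩ := h
  refine ⟨y.length + p, ?_, ?_, ?_⟩
  · rw [List.take_append, List.take_append, Nat.add_sub_cancel_left, h1]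
  · rw [List.getElem?_append_right (Nat.le_add_right _ _)]; simpa using h2
  · rw [List.getElem?_append_right (Nat.le_add_right _ _)]; simpa using h3

lemma take_eq_imp_getElem? {u v : Word} {q p : ℕ} (h : u.take q = v.take q) (hp : p < q) :
    u[p]? = v[p]? := by
  have h1 : (u.take q)[p]? = (v.take q)[p]? := by rw [h]
  rwa [List.getElem?_take, List.getElem?_take, if_pos hp, if_pos hp] at h1

lemma SLt.trans {u v w : Word} (h1 : SLt u v) (h2 : SLt v w) : SLt u w := by
  obtain ⟨p, hp1, hp2, hp3⟩ := h1
  obtain ⟨q, hq1, hq2, hq3⟩ := h2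
  rcases lt_trichotomy p q with h | h | h
  · refine ⟨p, ?_, hp2, ?_⟩
    · rw [hp1]
      calc v.take p = (v.take q).take p := by rw [List.take_take, min_eq_left (le_of_lt h)]
        _ = (w.take q).take p := by rw [hq1]
        _ = w.take p := by rw [List.take_take, min_eq_left (le_of_lt h)]
    · rw [← take_eq_imp_getElem? hq1 h, hp3]
  · subst h; exact ⟨p, hp1.trans hq1, hp2, hq3⟩
  · refine ⟨q, ?_, ?_, hq3⟩
    · calc u.take q = (u.take p).take q := by rw [List.take_take, min_eq_left (le_of_lt h)]
        _ = (v.take p).take q := by rw [hp1]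
        _ = (v.take q) := by rw [List.take_take, min_eq_left (le_of_lt h)]
        _ = (w.take q) := hq1
    · rw [take_eq_imp_getElem? hp1 h, hq2]

lemma take_succ_eq_of_take {u v : Word} {p : ℕ} (h : u.take p = v.take p) : True := trivial

lemma SLt.lex {u v : Word} (h : SLt u v) : List.Lex (· < ·) u v := by
  obtain ⟨p, h1, h2, h3⟩ := h
  induction p generalizing u v with
  | zero =>
    obtain ⟨u', hu⟩ : ∃ u', u = la :: u' := by
      cases u with
      | nil => simp at h2
      | cons a u' => simp at h2; exact ⟨u', by rw [h2]⟩
    obtain ⟨v', hv⟩ : ∃ v', v = lb :: v' := by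
      cases v with
      | nil => simp at h3
      | cons a v' => simp at h3; exact ⟨v', by rw [h3]⟩
    rw [hu, hv]
    exact List.Lex.rel (by decide)
  | succ p ih =>
    cases u with
    | nil => simp at h2
    | cons a u' =>
      cases v with
      | nil => simp at h3
      | cons b v' =>
        simp only [List.take_succ_cons, List.cons.injEq] at h1
        rw [h1.1]
        exact List.Lex.cons (ih h1.2 (by simpa using h2) (by simpa using h3))

/-! ### ordering facts and the Lyndon property of `c` -/

lemma ord : ∀ m, SLt (c (2 * m + 3)) (c (2 * m + 2))
  | 0 => ⟨1, rfl, rfl, rfl⟩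
  | (m + 1) => by
    have h1 : SLt (c (2 * m + 4)) (c (2 * m + 2)) := by
      have h := (ord m).append (c (2 * m + 2)) []
      rw [← c_rec_even m, List.append_nil] at h
      exact h
    have h2 := h1.prepend (c (2 * m + 3))
    rw [← c_rec_odd m, ← c_rec_even m] at h2
    have e5 : 2 * (m + 1) + 3 = 2 * m + 5 := by ring
    have e4 : 2 * (m + 1) + 2 = 2 * m + 4 := by ring
    rw [e5, e4]
    exact h2

lemma ord2 (m : ℕ) : SLt (c (2 * m + 4)) (c (2 * m + 2)) := by
  have := (ord m).append (c (2 * m + 2)) []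
  rw [← c_rec_even m, List.append_nil] at this
  exact this

lemma suffix_append_cases {s A B : Word} (h : s <:+ A ++ B) :
    (s <:+ B) ∨ ∃ s', s' <:+ A ∧ s' ≠ [] ∧ s = s' ++ B := by
  have hslen : s.length ≤ A.length + B.length := by
    have := h.length_le; simpa using this
  have hs := List.suffix_iff_eq_drop.mp h
  simp only [List.length_append] at hs
  by_cases hl : s.length ≤ B.length
  · left
    have hk : A.length + B.length - s.length = A.length + (B.length - s.length) := by omega
    rw [hk, List.drop_append] at hs
    rw [hs]
    rw [List.drop_eq_nil_of_le (by omega : A.length ≤ A.length + (B.length - s.length)), List.nil_append,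
      Nat.add_sub_cancel_left]
    exact List.drop_suffix _ _
  · right
    have hk : A.length + B.length - s.length ≤ A.length := by omega
    rw [List.drop_append_of_le_length hk] at hs
    refine ⟨A.drop (A.length + B.length - s.length), List.drop_suffix _ _, ?_, hs⟩
    have : (A.drop (A.length + B.length - s.length)).length = A.length - (A.length + B.length - s.length) := by
      simp
    intro hnil
    rw [hnil] at this
    simp at this
    omega

lemma lyndon : ∀ n, ∀ s : Word, s <:+ c (n + 2) → s ≠ [] → s.length < (c (n + 2)).length →
    SLt (c (n + 2)) s := by
  intro n
  induction n using Nat.twoStepInduction with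
  | zero =>
    intro s hs hne hlen
    have hc : c (0 + 2) = [la, lb] := rfl
    have hl1 : s.length = 1 := by
      have h1 := List.length_pos_iff.mpr hne
      have h2 : (c (0 + 2)).length = 2 := rfl
      omega
    have := List.suffix_iff_eq_drop.mp hs
    rw [hl1, hc] at this
    subst this
    exact ⟨0, rfl, rfl, rfl⟩
  | one =>
    intro s hs hne hlen
    have hc : c (1 + 2) = [la, la, lb] := rfl
    have h2 : (c (1 + 2)).length = 3 := rfl
    rw [h2] at hlen
    have h1 := List.length_pos_iff.mpr hne
    have := List.suffix_iff_eq_drop.mp hs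
    rw [hc] at this
    interval_cases hsl : s.length
    · norm_num at this; subst this; exact ⟨0, rfl, rfl, rfl⟩
    · norm_num at this; subst this; exact ⟨1, rfl, rfl, rfl⟩
  | more n ih0 ih1 =>
    rcases Nat.even_or_odd n with he | ho
    · obtain ⟨m, hm⟩ := he
      obtain ⟨m, rfl⟩ : ∃ m', n = 2 * m' := ⟨m, by omega⟩
      intro s hs hne hlen
      have hA : SLt (c (2 * m + 4)) (c (2 * m + 2)) := ord2 m
      have hrec := c_rec_even m
      have hs' : s <:+ c (2 * m + 3) ++ c (2 * m + 2) := by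
        rw [← hrec]; exact hs
      have hlen' : s.length < (c (2 * m + 3) ++ c (2 * m + 2)).length := by
        rw [← hrec]; exact hlen
      show SLt (c (2 * m + 4)) s
      rcases suffix_append_cases hs' with hsB | ⟨s', hs'A, hs'ne, rfl⟩
      · by_cases heq : s.length = (c (2 * m + 2)).length
        · rw [hsB.eq_of_length heq]
          exact hA
        · have hlt : s.length < (c (2 * m + 2)).length :=
            lt_of_le_of_ne hsB.length_le heq
          exact hA.trans (ih0 s hsB hne hlt)
      · have hs'len : s'.length < (c (2 * m + 3)).length := by
          simp only [List.length_append] at hlen'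
          omega
        have h := ih1 s' hs'A hs'ne hs'len
        have h2 := h.append (c (2 * m + 2)) (c (2 * m + 2))
        rw [← hrec] at h2
        exact h2
    · obtain ⟨m, rfl⟩ := ho
      intro s hs hne hlen
      have hA : SLt (c (2 * m + 5)) (c (2 * m + 4)) := by
        have h := ord (m + 1)
        have e5 : 2 * (m + 1) + 3 = 2 * m + 5 := by ring
        have e4 : 2 * (m + 1) + 2 = 2 * m + 4 := by ring
        rwa [e5, e4] at h
      have hrec := c_rec_odd m
      have hs' : s <:+ c (2 * m + 3) ++ c (2 * m + 4) := by
        rw [← hrec]; exact hs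
      have hlen' : s.length < (c (2 * m + 3) ++ c (2 * m + 4)).length := by
        rw [← hrec]; exact hlen
      show SLt (c (2 * m + 5)) s
      rcases suffix_append_cases hs' with hsB | ⟨s', hs'A, hs'ne, rfl⟩
      · by_cases heq : s.length = (c (2 * m + 4)).length
        · rw [hsB.eq_of_length heq]
          exact hA
        · have hlt : s.length < (c (2 * m + 4)).length :=
            lt_of_le_of_ne hsB.length_le heq
          have h := ih1 s hsB hne hlt
          exact hA.trans h
      · have hs'len : s'.length < (c (2 * m + 3)).length := by
          simp only [List.length_append] at hlen'
          omega
        have h := ih0 s' hs'A hs'ne hs'len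
        have h2 := h.append (c (2 * m + 4)) (c (2 * m + 4))
        rw [← hrec] at h2
        exact h2

/-! ### heads, no-bb, counts -/

lemma fw_head (n : ℕ) : (fw (n + 1)).head? = some la := by
  induction n with
  | zero => rfl
  | succ m ih =>
    have h : fw (m + 2) = fw (m + 1) ++ fw m := rfl
    show (fw (m + 2)).head? = some la
    rw [h, List.head?_append, ih]
    rfl

def RB : Letter → Letter → Prop := fun p q => ¬(p = lb ∧ q = lb)

lemma nobb : ∀ n, List.Chain' RB (fw n) := by
  intro n
  induction n using Nat.twoStepInduction with
  | zero => exact List.isChain_singleton _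
  | one => exact List.isChain_singleton _
  | more n ih1 ih2 =>
    have h : fw (n + 2) = fw (n + 1) ++ fw n := rfl
    rw [h]; apply List.isChain_append.mpr
    refine ⟨ih2, ih1, ?_⟩
    intro p hp q hq
    cases n with
    | zero =>
      have : (fw 1).getLast? = some la := rfl
      rw [this] at hp
      simp only [Option.mem_def, Option.some.injEq] at hp
      subst hp
      exact fun hc => by exact absurd hc.1 (by decide)
    | succ m =>
      rw [fw_head m] at hq
      simp only [Option.mem_def, Option.some.injEq] at hq
      subst hq
      exact fun hc => by exact absurd hc.2 (by decide)

lemma cntb : ∀ n, (fw (n + 2)).count lb = fib n := by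
  intro n
  induction n using Nat.twoStepInduction with
  | zero => rfl
  | one => rfl
  | more n ih1 ih2 =>
    have h : fw (n + 4) = fw (n + 3) ++ fw (n + 2) := rfl
    show (fw (n + 4)).count lb = fib (n + 2)
    rw [h, List.count_append]
    have ih2' : (fw (n + 3)).count lb = fib (n + 1) := ih2
    rw [ih1, ih2']
    rfl

lemma countP_range_getD (l : Word) :
    List.countP (fun i => decide (l.getD i la = lb)) (List.range l.length) = l.count lb := by
  induction l with
  | nil => rfl
  | cons a l ih =>
    have hl : (a :: l).length = l.length + 1 := rfl
    rw [hl, List.range_succ_eq_map, List.countP_cons, List.countP_map]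
    have hcomp : ((fun i => decide ((a :: l).getD i la = lb)) ∘ Nat.succ)
        = (fun i => decide (l.getD i la = lb)) := by
      funext i; rfl
    rw [hcomp, ih]
    have h0 : (a :: l).getD 0 la = a := rfl
    rw [h0, List.count_cons]
    cases a <;> simp [la, lb]

end BWT

set_option maxHeartbeats 2000000 in
open BWT in
/-- for `k ≥ 2` and `v = s_{2k}·b`, the conjugates of `v^rev` beginning with `b`
are exactly the `F_{2k-2}+1` lexicographically largest ones, the smallest of them being
`b·a·x_{2k}·b`; the suffix of `bwt(v^rev)` of length `F_{2k-2}+1` equals `b·a^{F_{2k-2}}`. -/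
theorem stmt10 (k : ℕ) (hk : 2 ≤ k) :
    (∃ i < ((fw (2*k) ++ [lb]).reverse).length,
      ((fw (2*k) ++ [lb]).reverse).rotate i = [lb, la] ++ x (2*k) ++ [lb]) ∧
    (∀ i < ((fw (2*k) ++ [lb]).reverse).length,
      ([lb, la] ++ x (2*k) ++ [lb] ≤ ((fw (2*k) ++ [lb]).reverse).rotate i ↔
        [lb] <+: ((fw (2*k) ++ [lb]).reverse).rotate i)) ∧
    ((List.range ((fw (2*k) ++ [lb]).reverse).length).filter
        (fun i => decide ([lb] <+: ((fw (2*k) ++ [lb]).reverse).rotate i))).length =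
      fib (2*k-2) + 1 ∧
    (bwt ((fw (2*k) ++ [lb]).reverse)).drop
        ((bwt ((fw (2*k) ++ [lb]).reverse)).length - (fib (2*k-2) + 1)) =
      [lb] ++ List.replicate (fib (2*k-2)) la := by
  obtain ⟨K, rfl⟩ : ∃ K, k = K + 2 := ⟨k - 2, by omega⟩
  have e : 2 * (K + 2) = 2 * K + 4 := by ring
  rw [e]
  have e2 : 2 * K + 4 - 2 = 2 * K + 2 := by omega
  rw [e2]
  set X := x (2 * K + 4) with hXdef
  set w := (fw (2 * K + 4) ++ [lb]).reverse with hwdef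
  -- basic structure facts
  have hfw : fw (2 * K + 4) = X ++ [la, lb] := by
    have h1 : fw (2 * K + 4) = x (2 * K + 4) ++ t (2 * K + 4) := fw_decomp (2 * K + 2)
    rw [hXdef, h1, t_even (2 * K + 4) (by omega)]
  have hpal : X.reverse = X := pal (2 * K + 2)
  have hfib2 : 2 ≤ fib (2 * K + 2) := fib_two_le (2 * K)
  have hfib4 : 4 ≤ fib (2 * K + 4) := by
    have h1 : fib (2 * K + 4) = fib (2 * K + 3) + fib (2 * K + 2) := rfl
    have h2 : 2 ≤ fib (2 * K + 3) := fib_two_le (2 * K + 1)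
    omega
  have hXlen : X.length + 2 = fib (2 * K + 4) := by
    rw [hXdef, x_len]; omega
  have hXpos : 0 < X.length := by omega
  have hw : w = [lb, lb, la] ++ X := by
    rw [hwdef, hfw]
    simp [hpal]
  have hN : w.length = X.length + 3 := by rw [hw]; simp
  have hc : c (2 * K + 4) = la :: (X ++ [lb]) := by rw [hXdef]; rfl
  -- rotation basics
  have rot_cons : ∀ i, i < w.length → w.rotate i = w.getD i la :: (w.drop (i + 1) ++ w.take i) := by
    intro i h
    rw [List.rotate_eq_drop_append_take (le_of_lt h), List.drop_eq_getElem_cons h,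
      List.getD_eq_getElem w la h, List.cons_append]
  have hprefix_iff : ∀ i, i < w.length → (([lb] <+: w.rotate i) ↔ w.getD i la = lb) := by
    intro i h
    rw [rot_cons i h]
    constructor
    · rintro ⟨t2, ht⟩
      rw [List.cons_append, List.nil_append] at ht
      injection ht with h1 h2
      exact h1.symm
    · intro hgd
      exact ⟨w.drop (i + 1) ++ w.take i, by rw [hgd]; rfl⟩
  have hge0 : w[0]? = some lb := by rw [hw, List.getElem?_append_left (by simp)]; rfl
  have hge1 : w[1]? = some lb := by rw [hw, List.getElem?_append_left (by simp)]; rfl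
  have hge2 : w[2]? = some la := by rw [hw, List.getElem?_append_left (by simp)]; rfl
  have hgej : ∀ j, w[j + 3]? = X[j]? := by
    intro j
    rw [hw, List.getElem?_append_right (by simp)]
    simp
  have hgd2 : w.getD 2 la = la := by rw [List.getD_eq_getElem?_getD, hge2]; rfl
  have hgdj : ∀ j, w.getD (j + 3) la = X.getD j la := by
    intro j
    rw [List.getD_eq_getElem?_getD, hgej j, ← List.getD_eq_getElem?_getD]
  have hdropj : ∀ j, w.drop (j + 3) = X.drop j := by
    intro j
    rw [hw]
    have h : List.drop (j + 3) ([lb, lb, la] ++ X) = X.drop j := List.drop_append.trans (by simp)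
    simpa [Nat.add_comm] using h
  have htakej : ∀ j, w.take (j + 3) = [lb, lb, la] ++ X.take j := by
    intro j
    rw [hw]
    have h : List.take (j + 3) ([lb, lb, la] ++ X) = [lb, lb, la] ++ X.take j := List.take_append.trans (by simp)
    simpa [Nat.add_comm] using h
  have hrot1 : w.rotate 1 = [lb, la] ++ X ++ [lb] := by
    rw [List.rotate_eq_drop_append_take (by rw [hN]; omega), hw]
    simp
  have hbc_cons : [lb, la] ++ X ++ [lb] = lb :: c (2 * K + 4) := by
    rw [hc]; simp
  -- the key lexicographic inequality
  have hkey : ∀ j, j < X.length → X.getD j la = lb →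
      List.Lex (· < ·) ([lb, la] ++ X ++ [lb]) (w.rotate (j + 3)) := by
    intro j hj hXj
    have hi : j + 3 < w.length := by omega
    have hrot : w.rotate (j + 3) = lb :: (X.drop (j + 1) ++ ([lb, lb, la] ++ X.take j)) := by
      rw [rot_cons _ hi, hgdj j, hXj]
      have e3 : j + 3 + 1 = (j + 1) + 3 := by omega
      rw [e3, hdropj (j + 1), htakej j]
    rw [hrot, hbc_cons]
    apply List.Lex.cons
    have hs_suf : X.drop (j + 1) ++ [lb] <:+ c (2 * K + 4) := by
      have hdd : (c (2 * K + 4)).drop (j + 2) = X.drop (j + 1) ++ [lb] := by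
        rw [hc]
        show (X ++ [lb]).drop (j + 1) = _
        exact List.drop_append_of_le_length (by omega)
      rw [← hdd]
      exact List.drop_suffix _ _
    have hs_ne : X.drop (j + 1) ++ [lb] ≠ [] := by simp
    have hs_len : (X.drop (j + 1) ++ [lb]).length < (c (2 * K + 4)).length := by
      rw [hc]; simp
    have hsl : SLt (c (2 * K + 4)) (X.drop (j + 1) ++ [lb]) :=
      lyndon (2 * K + 2) _ hs_suf hs_ne hs_len
    have h2 := hsl.append_right ([lb, la] ++ X.take j)
    have he : (X.drop (j + 1) ++ [lb]) ++ ([lb, la] ++ X.take j)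
        = X.drop (j + 1) ++ ([lb, lb, la] ++ X.take j) := by simp
    rw [he] at h2
    exact h2.lex
  -- part 2
  have part2 : ∀ i, i < w.length →
      (([lb, la] ++ X ++ [lb]) ≤ w.rotate i ↔ [lb] <+: w.rotate i) := by
    intro i hi
    rw [hprefix_iff i hi]
    rcases Nat.lt_or_ge i 3 with h3 | h3
    · interval_cases i
      · constructor
        · intro _
          rw [List.getD_eq_getElem?_getD, hge0]; rfl
        · intro _
          rw [List.rotate_zero, hw, hbc_cons, hc]
          exact le_of_lt (List.Lex.cons (List.Lex.rel (by decide)))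
      · constructor
        · intro _
          rw [List.getD_eq_getElem?_getD, hge1]; rfl
        · intro _
          rw [hrot1]
      · constructor
        · intro hle
          exfalso
          have hlt : w.rotate 2 < [lb, la] ++ X ++ [lb] := by
            rw [rot_cons 2 hi, hgd2, hbc_cons]
            exact List.Lex.rel (by decide)
          exact absurd (lt_of_le_of_lt hle hlt) (lt_irrefl _)
        · intro hgd
          rw [hgd2] at hgd
          exact absurd hgd (by decide)
    · obtain ⟨j, rfl⟩ : ∃ j, i = j + 3 := ⟨i - 3, by omega⟩
      have hj : j < X.length := by omega
      rw [hgdj j]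
      cases hXj : X.getD j la with
      | false =>
        constructor
        · intro hle
          exfalso
          have hlt : w.rotate (j + 3) < [lb, la] ++ X ++ [lb] := by
            rw [rot_cons _ hi, hgdj j, hXj, hbc_cons]
            exact List.Lex.rel (by decide)
          exact absurd (lt_of_le_of_lt hle hlt) (lt_irrefl _)
        · intro hgd
          exact absurd hgd (by decide)
      | true =>
        constructor
        · intro _; rfl
        · intro _
          exact le_of_lt (hkey j hj hXj)
  -- counting
  have hcnt : List.countP (fun i => decide ([lb] <+: w.rotate i)) (List.range w.length)
      = fib (2 * K + 2) + 1 := by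
    have hcongr : ∀ i ∈ List.range w.length,
        (decide ([lb] <+: w.rotate i) = true ↔ decide (w.getD i la = lb) = true) := by
      intro i hi
      simp only [decide_eq_true_eq]
      exact hprefix_iff i (List.mem_range.mp hi)
    rw [List.countP_congr hcongr, countP_range_getD w]
    have h1 : X.count lb + 1 = fib (2 * K + 2) := by
      have h2 : (fw (2 * K + 4)).count lb = fib (2 * K + 2) := cntb (2 * K + 2)
      rw [hfw, List.count_append] at h2
      have h3 : List.count lb [la, lb] = 1 := rfl
      omega
    rw [hw, List.count_append]
    have h4 : List.count lb [lb, lb, la] = 2 := rfl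
    omega
  refine ⟨⟨1, by omega, hrot1⟩, part2, ?_, ?_⟩
  · rw [← List.countP_eq_length_filter]
    exact hcnt
  · -- part 4: the BWT suffix
    have hperm : (sortedRotations w).Perm (rotations w) := List.perm_insertionSort _ _
    have hSlen : (sortedRotations w).length = w.length := by
      rw [sortedRotations, List.length_insertionSort, rotations, List.length_map,
        List.length_range]
    have hsorted : List.Pairwise (· ≤ ·) (sortedRotations w) := List.pairwise_insertionSort _ _
    have hmemS : ∀ z ∈ sortedRotations w, ∃ i, i < w.length ∧ w.rotate i = z := by
      intro z hz
      have h1 : z ∈ rotations w := hperm.subset hz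
      rw [rotations] at h1
      obtain ⟨i, hi, he⟩ := List.mem_map.mp h1
      exact ⟨i, List.mem_range.mp hi, he⟩
    have hcountP_S : List.countP (fun z => decide ([lb] <+: z)) (sortedRotations w)
        = fib (2 * K + 2) + 1 := by
      rw [hperm.countP_eq, rotations, List.countP_map]
      have hcc : ((fun z => decide ([lb] <+: z)) ∘ w.rotate)
          = (fun i => decide ([lb] <+: w.rotate i)) := rfl
      rw [hcc, hcnt]
    have hM_le : fib (2 * K + 2) + 1 ≤ w.length := by
      have h1 := List.countP_le_length (p := fun z => decide ([lb] <+: z)) (l := sortedRotations w)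
      rw [hcountP_S, hSlen] at h1
      exact h1
    have hkey_sorted : ∀ idx, (h : idx < (sortedRotations w).length) →
        w.length - (fib (2 * K + 2) + 1) ≤ idx → [lb] <+: (sortedRotations w)[idx] := by
      intro idx hidx hge
      by_contra hnb
      obtain ⟨i, hi, hzi⟩ := hmemS _ (List.getElem_mem hidx)
      have hlt : (sortedRotations w)[idx] < [lb, la] ++ X ++ [lb] := by
        refine not_le.mp (fun hle => hnb ?_)
        rw [← hzi] at hle ⊢
        exact (part2 i hi).mp hle
      have hall : ∀ q, (hq : q < (sortedRotations w).length) → q ≤ idx →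
          ¬ ([lb] <+: (sortedRotations w)[q]) := by
        intro q hq hqle hb
        obtain ⟨iq, hiq, hziq⟩ := hmemS _ (List.getElem_mem hq)
        have hbc_le : [lb, la] ++ X ++ [lb] ≤ (sortedRotations w)[q] := by
          rw [← hziq] at hb ⊢
          exact (part2 iq hiq).mpr hb
        have hle2 : (sortedRotations w)[q] ≤ (sortedRotations w)[idx] := by
          have h5 := hsorted.rel_get_of_le (a := ⟨q, hq⟩) (b := ⟨idx, hidx⟩)
            (Fin.mk_le_mk.mpr hqle)
          simpa [List.get_eq_getElem] using h5
        exact absurd (lt_of_le_of_lt (hbc_le.trans hle2) hlt) (lt_irrefl _)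
      have hsplit : List.countP (fun z => decide ([lb] <+: z)) (sortedRotations w)
          = List.countP (fun z => decide ([lb] <+: z)) ((sortedRotations w).take (idx + 1))
            + List.countP (fun z => decide ([lb] <+: z)) ((sortedRotations w).drop (idx + 1)) := by
        rw [← List.countP_append, List.take_append_drop]
      have h0 : List.countP (fun z => decide ([lb] <+: z))
          ((sortedRotations w).take (idx + 1)) = 0 := by
        rw [List.countP_eq_zero]
        intro z hzmem hb
        obtain ⟨q, hq, hzq⟩ := List.mem_take_iff_getElem.mp hzmem
        have hq1 : q < (sortedRotations w).length := lt_of_lt_of_le hq (min_le_right _ _)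
        have hq2 : q ≤ idx := by
          have := lt_of_lt_of_le hq (min_le_left _ _); omega
        exact hall q hq1 hq2 (by rw [hzq]; exact of_decide_eq_true hb)
      have h1 : List.countP (fun z => decide ([lb] <+: z))
          ((sortedRotations w).drop (idx + 1)) ≤ w.length - idx - 1 := by
        have h2 := List.countP_le_length (p := fun z => decide ([lb] <+: z))
          (l := (sortedRotations w).drop (idx + 1))
        rw [List.length_drop, hSlen] at h2
        omega
      rw [hcountP_S, h0] at hsplit
      rw [hSlen] at hidx
      omega
    set D := (sortedRotations w).drop (w.length - (fib (2 * K + 2) + 1)) with hDdef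
    have hDlen : D.length = fib (2 * K + 2) + 1 := by
      rw [hDdef, List.length_drop, hSlen]; omega
    have hD_b : ∀ z ∈ D, [lb] <+: z := by
      intro z hz
      rw [hDdef] at hz
      obtain ⟨q, hq, hzq⟩ := List.mem_drop_iff_getElem.mp hz
      rw [← hzq]
      exact hkey_sorted _ (by omega) (by omega)
    have hD_countP : List.countP (fun z => decide ([lb] <+: z)) D = fib (2 * K + 2) + 1 :=
      (List.countP_eq_length.mpr fun z hz => decide_eq_true (hD_b z hz)).trans hDlen
    have htake0 : List.countP (fun z => decide ([lb] <+: z))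
        ((sortedRotations w).take (w.length - (fib (2 * K + 2) + 1))) = 0 := by
      have hsplit : List.countP (fun z => decide ([lb] <+: z)) (sortedRotations w)
          = List.countP (fun z => decide ([lb] <+: z))
              ((sortedRotations w).take (w.length - (fib (2 * K + 2) + 1)))
            + List.countP (fun z => decide ([lb] <+: z)) D := by
        rw [hDdef, ← List.countP_append, List.take_append_drop]
      rw [hcountP_S, hD_countP] at hsplit
      omega
    have hbc_mem : ([lb, la] ++ X ++ [lb]) ∈ D := by
      have hmem : ([lb, la] ++ X ++ [lb]) ∈ sortedRotations w := by
        apply hperm.mem_iff.mpr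
        rw [rotations]
        exact List.mem_map.mpr ⟨1, List.mem_range.mpr (by omega), hrot1⟩
      rw [← List.take_append_drop (w.length - (fib (2 * K + 2) + 1)) (sortedRotations w),
        ← hDdef] at hmem
      rcases List.mem_append.mp hmem with hmt | hmd
      · exfalso
        have hpos : 0 < List.countP (fun z => decide ([lb] <+: z))
            ((sortedRotations w).take (w.length - (fib (2 * K + 2) + 1))) :=
          List.countP_pos_iff.mpr ⟨_, hmt, decide_eq_true ⟨la :: (X ++ [lb]), rfl⟩⟩
        omega
      · exact hmd
    obtain ⟨z0, tl, hDeq⟩ : ∃ z0 tl, D = z0 :: tl := by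
      cases hD : D with
      | nil => rw [hD] at hDlen; simp at hDlen
      | cons a b => exact ⟨a, b, rfl⟩
    have hsorted_D : List.Pairwise (· ≤ ·) D :=
      List.Pairwise.sublist (by rw [hDdef]; exact List.drop_sublist _ _) hsorted
    have hz0 : z0 = [lb, la] ++ X ++ [lb] := by
      have h1 : z0 ≤ [lb, la] ++ X ++ [lb] := by
        rw [hDeq] at hbc_mem hsorted_D
        rcases List.mem_cons.mp hbc_mem with heq | htl
        · exact le_of_eq heq.symm
        · exact (List.pairwise_cons.mp hsorted_D).1 _ htl
      have h2 : [lb, la] ++ X ++ [lb] ≤ z0 := by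
        have hz0D : z0 ∈ D := by rw [hDeq]; exact List.mem_cons_self
        have hz0S : z0 ∈ sortedRotations w := by
          rw [hDdef] at hz0D; exact List.mem_of_mem_drop hz0D
        obtain ⟨i, hi, hzi⟩ := hmemS _ hz0S
        rw [← hzi]
        exact (part2 i hi).mpr (by rw [hzi]; exact hD_b _ hz0D)
      exact le_antisymm h1 h2
    -- head and last-letter facts
    have hXhead : X.head? = some la := by
      rw [hXdef]
      show ((fw (2 * K + 4)).take ((fw (2 * K + 4)).length - 2)).head? = some la
      rw [List.head?_take, if_neg (by rw [fw_len]; omega)]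
      exact fw_head (2 * K + 3)
    have hXlast : X.getLast? = some la := by
      rw [List.getLast?_eq_head?_reverse, hpal, hXhead]
    have hwlast : w.getLast? = some la := by
      rw [hw, List.getLast?_append, hXlast]; rfl
    have hrot_last : ∀ i, 1 ≤ i → i < w.length → (w.rotate i).getLast? = w[i - 1]? := by
      intro i h1 hi
      rw [List.rotate_eq_drop_append_take (le_of_lt hi), List.getLast?_append]
      have hts : (w.take i).getLast? = w[i - 1]? := by
        rw [List.getLast?_eq_getElem?, List.length_take, min_eq_left (le_of_lt hi),
          List.getElem?_take, if_pos (by omega)]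
      rw [hts]
      obtain ⟨v, hv⟩ : ∃ v, w[i - 1]? = some v :=
        ⟨w[i-1]'(by omega), List.getElem?_eq_some_iff.mpr ⟨by omega, rfl⟩⟩
      rw [hv]; rfl
    have hadj : ∀ j, j + 1 < X.length → X.getD j la = lb → X.getD (j + 1) la = la := by
      have hchain : List.Chain' RB X := by
        rw [hXdef]
        show List.Chain' RB ((fw (2 * K + 4)).take ((fw (2 * K + 4)).length - 2))
        exact (nobb (2 * K + 4)).take _
      intro j hj hXj
      have hrb := List.isChain_iff_getElem.mp hchain j (by omega)
      have hg1 : X.getD j la = X[j] := List.getD_eq_getElem X la (by omega)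
      have hg2 : X.getD (j + 1) la = X[j+1] := List.getD_eq_getElem X la (by omega)
      rw [hg1] at hXj
      rw [hg2]
      cases hx2 : X[j+1] with
      | false => rfl
      | true => exact absurd ⟨hXj, hx2⟩ hrb
    have hbc_last : ([lb, la] ++ X ++ [lb]).getLast? = some lb := by
      have hform : [lb, la] ++ X ++ [lb] = ([lb, la] ++ X) ++ [lb] := by
        simp [List.append_assoc]
      rw [hform, List.getLast?_append]; rfl
    have hrot_head : ∀ i, i < w.length → w.rotate i = [lb, la] ++ X ++ [lb] →
        w.getD i la = lb := by
      intro i hi heq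
      have h2 := rot_cons i hi
      rw [heq, hbc_cons] at h2
      have h3 := congrArg List.head? h2
      simp only [List.head?_cons] at h3
      exact (Option.some.inj h3).symm
    have hrot_uniq : ∀ i, i < w.length → w.rotate i = [lb, la] ++ X ++ [lb] → i = 1 := by
      intro i hi heq
      by_contra hne
      rcases Nat.eq_zero_or_pos i with rfl | hpos
      · rw [List.rotate_zero] at heq
        rw [heq, hbc_last] at hwlast
        simp at hwlast
      · have hlast := hrot_last i hpos hi
        rw [heq, hbc_last] at hlast
        have hhead := hrot_head i hi heq
        -- i ≥ 2
        have hi2 : 2 ≤ i := by omega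
        by_cases h3 : i = 2
        · subst h3
          rw [hgd2] at hhead; exact absurd hhead (by decide)
        by_cases h4 : i = 3
        · subst h4
          have e6 : (3:ℕ) - 1 = 2 := rfl
          rw [e6, hge2] at hlast
          simp at hlast
        obtain ⟨j, rfl⟩ : ∃ j, i = j + 4 := ⟨i - 4, by omega⟩
        have hj1 : j + 1 < X.length := by omega
        have hXj1 : X.getD (j + 1) la = lb := by
          have h5 : w.getD (j + 4) la = X.getD (j + 1) la := by
            have e4 : j + 4 = (j + 1) + 3 := by omega
            rw [e4, hgdj (j + 1)]
          rw [← h5]; exact hhead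
        have hXj0 : X.getD j la = lb := by
          have h6 : w[j + 4 - 1]? = X[j]? := by
            have e5 : j + 4 - 1 = j + 3 := by omega
            rw [e5, hgej j]
          rw [h6] at hlast
          rw [List.getD_eq_getElem?_getD, ← hlast]; rfl
        rcases Nat.eq_zero_or_pos j with rfl | hjp
        · exact absurd (hadj 0 hj1 hXj0) (by rw [hXj1]; decide)
        · exact absurd (hadj j hj1 hXj0) (by rw [hXj1]; decide)
    have hcount_bc : List.countP (fun z => decide (z = ([lb, la] ++ X ++ [lb])))
        (sortedRotations w) ≤ 1 := by
      rw [hperm.countP_eq, rotations, List.countP_map]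
      have hmono : List.countP ((fun z => decide (z = ([lb, la] ++ X ++ [lb]))) ∘ w.rotate)
          (List.range w.length) ≤ List.countP (fun i => decide (i = 1)) (List.range w.length) := by
        apply List.countP_mono_left
        intro i hir hbe
        have hbe' : w.rotate i = [lb, la] ++ X ++ [lb] := of_decide_eq_true hbe
        exact decide_eq_true (hrot_uniq i (List.mem_range.mp hir) hbe')
      refine le_trans hmono ?_
      have hcr : List.countP (fun i => decide (i = 1)) (List.range w.length)
          = List.count 1 (List.range w.length) := by
        rw [List.count_eq_countP]
        apply List.countP_congr
        intro i _
        by_cases h : i = 1 <;> simp [h]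
      rw [hcr]
      exact List.nodup_iff_count_le_one.mp List.nodup_range 1
    have htl_nbc : ∀ z ∈ tl, z ≠ ([lb, la] ++ X ++ [lb]) := by
      have hsub : D.Sublist (sortedRotations w) := by
        rw [hDdef]; exact List.drop_sublist _ _
      have hcle := hsub.countP_le (p := fun z => decide (z = ([lb, la] ++ X ++ [lb])))
      rw [hDeq, hz0] at hcle
      have hstep : List.countP (fun z => decide (z = ([lb, la] ++ X ++ [lb])))
          (([lb, la] ++ X ++ [lb]) :: tl)
          = List.countP (fun z => decide (z = ([lb, la] ++ X ++ [lb]))) tl + 1 := by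
        rw [List.countP_cons]
        simp
      rw [hstep] at hcle
      have hc0 : List.countP (fun z => decide (z = ([lb, la] ++ X ++ [lb]))) tl = 0 := by
        have := le_trans hcle hcount_bc
        omega
      intro z hz hzeq
      have hnm := List.countP_eq_zero.mp hc0 z hz
      rw [hzeq] at hnm
      simp at hnm
    have htl_last : ∀ z ∈ tl, z.getLastD la = la := by
      intro z hz
      have hzD : z ∈ D := by rw [hDeq]; exact List.mem_cons_of_mem _ hz
      have hzS : z ∈ sortedRotations w := by
        rw [hDdef] at hzD; exact List.mem_of_mem_drop hzD
      obtain ⟨i, hi, hzi⟩ := hmemS _ hzS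
      have hb : [lb] <+: z := hD_b _ hzD
      have hhead : w.getD i la = lb := by
        rw [← hzi] at hb
        exact (hprefix_iff i hi).mp hb
      have hne1 : i ≠ 1 := by
        rintro rfl
        exact htl_nbc z hz (by rw [← hzi, hrot1])
      rw [List.getLastD_eq_getLast?]
      rcases Nat.eq_zero_or_pos i with rfl | hpos
      · rw [← hzi, List.rotate_zero, hwlast]; rfl
      · have hlast := hrot_last i hpos hi
        rw [hzi] at hlast
        have hval : w[i - 1]? = some la := by
          by_cases h3 : i = 2
          · subst h3
            rw [hgd2] at hhead
            exact absurd hhead (by decide)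
          by_cases h4 : i = 3
          · subst h4
            have e6 : (3:ℕ) - 1 = 2 := rfl
            rw [e6, hge2]
          · obtain ⟨j, rfl⟩ : ∃ j, i = j + 4 := ⟨i - 4, by omega⟩
            have hj1 : j + 1 < X.length := by omega
            have hj0 : j < X.length := by omega
            have hXj1 : X.getD (j + 1) la = lb := by
              have e4 : j + 4 = (j + 1) + 3 := by omega
              rw [e4, hgdj (j + 1)] at hhead
              exact hhead
            have e5 : j + 4 - 1 = j + 3 := by omega
            rw [e5, hgej j]
            have hXj0 : X.getD j la = la := by
              cases hXx : X.getD j la with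
              | false => rfl
              | true =>
                have hcontra := hadj j hj1 hXx
                rw [hXj1] at hcontra
                exact absurd hcontra (by decide)
            have hsome : X[j]? = some (X[j]'hj0) := List.getElem?_eq_some_iff.mpr ⟨hj0, rfl⟩
            rw [List.getD_eq_getElem?_getD, hsome] at hXj0
            rw [hsome]
            rw [show (some (X[j]'hj0)).getD la = X[j]'hj0 from rfl] at hXj0
            rw [hXj0]
        rw [hlast, hval]
        rfl
    -- final computation
    have hbwt : bwt w = List.map (fun u => u.getLastD la) (sortedRotations w) := rfl
    have hbwtlen : (bwt w).length = w.length := by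
      rw [hbwt, List.length_map, hSlen]
    rw [hbwtlen, hbwt, ← List.map_drop, ← hDdef, hDeq, hz0]
    have hfbc : ([lb, la] ++ X ++ [lb]).getLastD la = lb := by
      have hform : [lb, la] ++ X ++ [lb] = ([lb, la] ++ X) ++ [lb] := by simp
      rw [hform]
      exact List.getLastD_concat
    rw [List.map_cons, hfbc]
    have hmap : List.map (fun u => u.getLastD la) tl = List.replicate (fib (2 * K + 2)) la := by
      rw [List.eq_replicate_iff]
      constructor
      · rw [List.length_map]
        have hl1 : tl.length + 1 = fib (2 * K + 2) + 1 := by rw [← hDlen, hDeq]; rfl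
        omega
      · intro b hbm
        obtain ⟨z, hz, rfl⟩ := List.mem_map.mp hbm
        exact htl_last z hz
    rw [hmap]
    rfl
end

section
/- For every k ≥ 2, let v = s_{2k}·b (so v^rev = b·b·a·x_{2k}). Every conjugate of v^rev that is lexicographically strictly smaller than the conjugate x_{2k}·b·b·a ends with the letter b. -/
namespace BWT
namespace S12

lemma fib_pos : ∀ n, 0 < fib n
  | 0 => by decide
  | 1 => by decide
  | (n+2) => by have := fib_pos n; show 0 < fib (n+1) + fib n; omega

lemma length_fw : ∀ n, (fw n).length = fib n
  | 0 => rfl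
  | 1 => rfl
  | (n+2) => by
      show (fw (n+1) ++ fw n).length = fib (n+1) + fib n
      rw [List.length_append, length_fw (n+1), length_fw n]

lemma lt_fib : ∀ p, p < fib (p+2)
  | 0 => by decide
  | (p+1) => by
      have h := lt_fib p
      have h2 := fib_pos (p+1)
      show p + 1 < fib (p+2) + fib (p+1)
      omega

lemma fib_big : ∀ n, n + 5 ≤ fib (n+4)
  | 0 => by decide
  | (n+1) => by
      have h := fib_big n
      have h2 := fib_pos (n+3)
      show n + 1 + 5 ≤ fib (n+4) + fib (n+3)
      omega

lemma fib_two_le (n : ℕ) : 2 ≤ fib (n+2) := by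
  have := fib_pos n; have := fib_pos (n+1)
  show 2 ≤ fib (n+1) + fib n
  omega

lemma fw_prefix_succ (n : ℕ) (h : 1 ≤ n) : fw n <+: fw (n+1) := by
  rcases n with _ | n
  · omega
  · rcases n with _ | n
    · exact ⟨[lb], rfl⟩
    · exact ⟨fw (n+1), rfl⟩

lemma fw_prefix : ∀ {m n : ℕ}, 1 ≤ m → m ≤ n → fw m <+: fw n := by
  intro m n h1 h2
  induction n with
  | zero => exact ((by omega : False)).elim
  | succ n ih =>
    rcases Nat.eq_or_lt_of_le h2 with rfl | h
    · exact List.prefix_refl _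
    · exact (ih (by omega)).trans (fw_prefix_succ n (by omega))

/-- the infinite Fibonacci word -/
def f (p : ℕ) : Bool := (fw (p+2))[p]'(by rw [length_fw]; exact lt_fib p)

lemma getElem_fw {n p : ℕ} (h1 : 1 ≤ n) (h : p < (fw n).length) : (fw n)[p] = f p := by
  unfold f
  rcases le_total n (p+2) with hle | hle
  · exact (fw_prefix h1 hle).getElem h
  · exact ((fw_prefix (by omega) hle).getElem (by rw [length_fw]; exact lt_fib p)).symm

end S12
end BWT
namespace BWT
namespace S12

def psiW (w : Word) : Word := w.flatMap (fun c => bif c then [la, lb] else [la, lb, la])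

def blk (c : Bool) : Word := bif c then [la, lb] else [la, lb, la]

lemma psiW_append (u v : Word) : psiW (u ++ v) = psiW u ++ psiW v :=
  List.flatMap_append

lemma psiW_cons (c : Bool) (w : Word) : psiW (c :: w) = blk c ++ psiW w := rfl

lemma psiW_fw : ∀ n, psiW (fw n) = fw (n+2)
  | 0 => by decide
  | 1 => by decide
  | (n+2) => by
      show psiW (fw (n+1) ++ fw n) = fw (n+3) ++ fw (n+2)
      rw [psiW_append, psiW_fw (n+1), psiW_fw n]

def sz (i : ℕ) : ℕ := bif f i then 2 else 3

lemma sz_a {i : ℕ} (h : f i = la) : sz i = 3 := by simp [sz, h]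
lemma sz_b {i : ℕ} (h : f i = lb) : sz i = 2 := by simp [sz, h]
lemma szle (i : ℕ) : 2 ≤ sz i ∧ sz i ≤ 3 := by
  rcases Bool.eq_false_or_eq_true (f i) with h | h
  · rw [sz_b h]; omega
  · rw [sz_a h]; omega

lemma blk_len (c : Bool) : (blk c).length = (bif c then 2 else 3) := by cases c <;> rfl

def beta : ℕ → ℕ
  | 0 => 0
  | (i+1) => beta i + sz i

lemma beta_succ (i : ℕ) : beta (i+1) = beta i + sz i := rfl

lemma beta_strictMono : StrictMono beta :=
  strictMono_nat_of_lt_succ (fun n => by rw [beta_succ]; have := (szle n).1; omega)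

lemma beta_ge (i : ℕ) : i ≤ beta i := by
  induction i with
  | zero => exact le_refl 0
  | succ i ih => rw [beta_succ]; have := (szle i).1; omega

lemma beta_len : ∀ (n i : ℕ), 1 ≤ n → i ≤ (fw n).length →
    (psiW ((fw n).take i)).length = beta i := by
  intro n i h1 h2
  induction i with
  | zero => rfl
  | succ i ih =>
    have hi : i < (fw n).length := by omega
    rw [← List.take_concat_get hi, List.concat_eq_append, psiW_append,
      List.length_append, ih (by omega), beta_succ]
    congr 1
    show (psiW [(fw n)[i]]).length = sz i
    rw [getElem_fw h1 hi]
    rcases Bool.eq_false_or_eq_true (f i) with h | h <;> rw [h]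
    · rw [sz_b h]; rfl
    · rw [sz_a h]; rfl

lemma f_block (i r : ℕ) (hr : r < sz i) : f (beta i + r) = (blk (f i)).getD r la := by
  have hilen : i < (fw (i+2)).length := by rw [length_fw]; exact lt_fib i
  have hsplit : fw (i+4) = psiW ((fw (i+2)).take i) ++ (blk (f i) ++ psiW ((fw (i+2)).drop (i+1))) := by
    rw [show fw (i+4) = fw ((i+2)+2) from rfl, ← psiW_fw (i+2)]
    conv_lhs => rw [← List.take_append_drop i (fw (i+2))]
    rw [psiW_append, List.drop_eq_getElem_cons hilen, psiW_cons,
      getElem_fw (by omega) hilen]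
  have hblk : (blk (f i)).length = sz i := by
    rw [blk_len]; rfl
  have hb0 : beta i + r < (psiW ((fw (i+2)).take i)).length + (blk (f i)).length := by
    rw [beta_len (i+2) i (by omega) (le_of_lt hilen), hblk]; omega
  have hlen2 : beta i + r < (fw (i+4)).length := by
    rw [hsplit, List.length_append, List.length_append]; omega
  have hval : (fw (i+4))[beta i + r]'hlen2 = (blk (f i)).getD r la := by
    have hrblk : r < (blk (f i)).length := by rw [hblk]; exact hr
    rw [List.getD_eq_getElem _ _ (by rw [hblk]; exact hr)]
    have hA : (psiW ((fw (i+2)).take i)).length = beta i :=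
      beta_len (i+2) i (by omega) (le_of_lt hilen)
    simp only [hsplit]
    rw [List.getElem_append_right (by omega)]
    rw [List.getElem_append_left (by omega)]
    congr 1
    omega
  rw [← hval]
  exact (getElem_fw (by omega) hlen2).symm

lemma f_beta0 (i : ℕ) : f (beta i) = la := by
  have h := f_block i 0 (by have := (szle i).1; omega)
  rcases Bool.eq_false_or_eq_true (f i) with hf | hf <;>
    simpa [blk, hf] using h

lemma f_beta1 (i : ℕ) : f (beta i + 1) = lb := by
  have h := f_block i 1 (by have := (szle i).1; omega)
  rcases Bool.eq_false_or_eq_true (f i) with hf | hf <;>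
    simpa [blk, hf] using h

lemma f_beta2 (i : ℕ) (hf : f i = la) : f (beta i + 2) = la := by
  have h := f_block i 2 (by rw [sz_a hf]; omega)
  simpa [blk, hf] using h

lemma f_zero : f 0 = la := by
  have := f_beta0 0
  simpa [beta] using this

lemma exists_block (q : ℕ) : ∃ i r, r < sz i ∧ q = beta i + r := by
  induction q with
  | zero => exact ⟨0, 0, by have := (szle 0).1; omega, by simp [beta]⟩
  | succ q ih =>
    obtain ⟨i, r, hr, rfl⟩ := ih
    by_cases h : r + 1 < sz i
    · exact ⟨i, r+1, h, by omega⟩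
    · exact ⟨i+1, 0, by have := (szle (i+1)).1; omega, by rw [beta_succ]; omega⟩

lemma f_succ_of_b (q : ℕ) (h : f q = lb) : f (q+1) = la := by
  obtain ⟨i, r, hr, rfl⟩ := exists_block q
  have hsz := szle i
  rcases r with _ | _ | _ | r
  · rw [show beta i + 0 = beta i from rfl, f_beta0] at h; exact absurd h (by decide)
  · rcases Bool.eq_false_or_eq_true (f i) with hfi | hfi
    · have hsb : sz i = 2 := sz_b hfi
      rw [show beta i + 1 + 1 = beta (i+1) from by rw [beta_succ, hsb]]
      exact f_beta0 (i+1)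
    · rw [show beta i + 1 + 1 = beta i + 2 from rfl]
      exact f_beta2 i hfi
  · have hfi : f i = la := by
      rcases Bool.eq_false_or_eq_true (f i) with hfi | hfi
      · have := sz_b hfi; omega
      · exact hfi
    rw [f_beta2 i hfi] at h; exact absurd h (by decide)
  · omega

end S12
end BWT
namespace BWT
namespace S12

lemma key (q : ℕ) : f q = la →
    ∃ j, (∀ t, t < j → f (q+1+t) = f t) ∧ f j = la ∧ f (q+1+j) = lb := by
  induction q using Nat.strong_induction_on with
  | _ q IH =>
    intro hq
    obtain ⟨i, r, hr, rfl⟩ := exists_block q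
    have hsz := szle i
    rcases r with _ | _ | _ | r
    · -- r = 0
      refine ⟨0, fun t ht => absurd ht (by omega), f_zero, ?_⟩
      show f (beta i + 0 + 1 + 0) = lb
      simpa using f_beta1 i
    · -- r = 1 : impossible
      rw [f_beta1 i] at hq; exact absurd hq (by decide)
    · -- r = 2
      have hfi : f i = la := by
        rcases Bool.eq_false_or_eq_true (f i) with hfi | hfi
        · have := sz_b hfi; omega
        · exact hfi
      have hsa : sz i = 3 := sz_a hfi
      obtain ⟨j₀, hag, hja, hjb⟩ := IH i (by have := beta_ge i; omega) hfi
      have hb1 : beta (i+1) = beta i + 3 := by rw [beta_succ, hsa]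
      have hshift : ∀ t, t ≤ j₀ → beta (i+1+t) = beta (i+1) + beta t := by
        intro t ht
        induction t with
        | zero => simp [beta]
        | succ t iht =>
          have ht' : t ≤ j₀ := by omega
          have hsz' : sz (i+1+t) = sz t := by unfold sz; rw [hag t (by omega)]
          have h1 : i+1+(t+1) = (i+1+t)+1 := by omega
          have h2 := iht ht'
          have h3 := beta_succ t
          rw [h1, beta_succ]
          omega
      have hsj0 : sz j₀ = 3 := sz_a hja
      have hsij0 : sz (i+1+j₀) = 2 := sz_b hjb
      have e2 : beta (i+1+j₀) = beta (i+1) + beta j₀ := hshift j₀ le_rfl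
      have e3 : beta (i+1+j₀+1) = beta (i+1+j₀) + 2 := by rw [beta_succ, hsij0]
      refine ⟨beta j₀ + 3, ?_, ?_, ?_⟩
      · intro s hs
        rw [show beta i + 2 + 1 + s = beta (i+1) + s from by omega]
        rcases lt_or_ge s (beta j₀) with hs' | hs'
        · obtain ⟨t, r', hr', rfl⟩ := exists_block s
          have ht : t < j₀ := by
            by_contra hcon
            have : beta j₀ ≤ beta t := beta_strictMono.monotone (by omega)
            omega
          have hft : f (i+1+t) = f t := hag t ht
          have hszt : sz (i+1+t) = sz t := by unfold sz; rw [hft]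
          have e4 : beta (i+1+t) = beta (i+1) + beta t := hshift t (le_of_lt ht)
          rw [show beta (i+1) + (beta t + r') = beta (i+1+t) + r' from by omega]
          rw [f_block (i+1+t) r' (by omega), f_block t r' hr', hft]
        · have hcase : s = beta j₀ ∨ s = beta j₀ + 1 ∨ s = beta j₀ + 2 := by omega
          rcases hcase with rfl | rfl | rfl
          · rw [show beta (i+1) + beta j₀ = beta (i+1+j₀) from by omega]
            rw [f_beta0, f_beta0]
          · rw [show beta (i+1) + (beta j₀ + 1) = beta (i+1+j₀) + 1 from by omega]
            rw [f_beta1, f_beta1]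
          · rw [show beta (i+1) + (beta j₀ + 2) = beta (i+1+j₀+1) from by omega]
            rw [f_beta0, f_beta2 j₀ hja]
      · rw [show beta j₀ + 3 = beta (j₀+1) from by rw [beta_succ, hsj0]]
        exact f_beta0 (j₀+1)
      · rw [show beta i + 2 + 1 + (beta j₀ + 3) = beta (i+1+j₀+1) + 1 from by omega]
        exact f_beta1 (i+1+j₀+1)
    · -- r ≥ 3 : impossible
      omega

end S12
end BWT
namespace BWT
namespace S12

def tl (n : ℕ) : Word := if n % 2 = 0 then [la, lb] else [lb, la]

lemma tl_add_two (n : ℕ) : tl (n+2) = tl n := by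
  unfold tl
  rw [Nat.add_mod_right]

lemma x_append (n : ℕ) : x (n+4) = fw (n+3) ++ x (n+2) := by
  show (fw (n+4)).take ((fw (n+4)).length - 2) = fw (n+3) ++ (fw (n+2)).take ((fw (n+2)).length - 2)
  have h2 : 2 ≤ (fw (n+2)).length := by rw [length_fw]; exact fib_two_le n
  rw [show fw (n+4) = fw (n+3) ++ fw (n+2) from rfl, List.length_append]
  rw [show (fw (n+3)).length + (fw (n+2)).length - 2
      = (fw (n+3)).length + ((fw (n+2)).length - 2) from by omega]
  rw [List.take_append, List.take_of_length_le (by omega), Nat.add_sub_cancel_left]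

lemma fw_eq_x : ∀ n, fw (n+2) = x (n+2) ++ tl n
  | 0 => by decide
  | 1 => by decide
  | (n+2) => by
      rw [show fw (n+4) = fw (n+3) ++ fw (n+2) from rfl, fw_eq_x n, x_append n,
        tl_add_two, List.append_assoc]

lemma M : ∀ n, fw (n+2) ++ x (n+3) = fw (n+3) ++ x (n+2)
  | 0 => by decide
  | (n+1) => by
      have hx := x_append n
      have hm := M n
      rw [show fw (n+4) = fw (n+3) ++ fw (n+2) from rfl, hx, List.append_assoc, hm]

lemma rev : ∀ n : ℕ, (fw (n+2)).reverse = tl (n+1) ++ x (n+2) ∧ (x (n+2)).reverse = x (n+2)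
  | 0 => by constructor <;> decide
  | 1 => by constructor <;> decide
  | (n+2) => by
      obtain ⟨h1, h2⟩ := rev n
      obtain ⟨h1', h2'⟩ := rev (n+1)
      have hkey : x (n+2) ++ (tl (n+2) ++ x (n+3)) = fw (n+3) ++ x (n+2) := by
        rw [tl_add_two, ← List.append_assoc, ← fw_eq_x n, M n]
      constructor
      · calc (fw (n+4)).reverse
            = (fw (n+2)).reverse ++ (fw (n+3)).reverse := by
              rw [show fw (n+4) = fw (n+3) ++ fw (n+2) from rfl, List.reverse_append]
          _ = (tl (n+1) ++ x (n+2)) ++ (tl (n+2) ++ x (n+3)) := by rw [h1, h1']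
          _ = tl (n+1) ++ (x (n+2) ++ (tl (n+2) ++ x (n+3))) := by
              rw [List.append_assoc]
          _ = tl (n+1) ++ (fw (n+3) ++ x (n+2)) := by rw [hkey]
          _ = tl (n+3) ++ x (n+4) := by rw [x_append n, tl_add_two]
      · calc (x (n+4)).reverse
            = (x (n+2)).reverse ++ (fw (n+3)).reverse := by
              rw [x_append n, List.reverse_append]
          _ = x (n+2) ++ (tl (n+2) ++ x (n+3)) := by rw [h2, h1']
          _ = fw (n+3) ++ x (n+2) := hkey
          _ = x (n+4) := (x_append n).symm

lemma length_x (n : ℕ) : (x (n+2)).length = fib (n+2) - 2 := by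
  show ((fw (n+2)).take ((fw (n+2)).length - 2)).length = fib (n+2) - 2
  rw [List.length_take, length_fw]
  omega

lemma x_getElem (n p : ℕ) (h : p < (x (n+2)).length) : (x (n+2))[p] = f p := by
  have hlen : p < (fw (n+2)).length := by
    rw [length_fw]
    rw [length_x] at h
    omega
  show ((fw (n+2)).take ((fw (n+2)).length - 2))[p]'h = f p
  refine (List.getElem_take).trans ?_
  exact getElem_fw (by omega) hlen

lemma lex_append (c : Word) {u v : Word} (h : List.Lex (· < ·) u v) :
    List.Lex (· < ·) (c ++ u) (c ++ v) := by
  induction c with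
  | nil => simpa
  | cons a c ih => exact List.Lex.cons ih

end S12
end BWT
open BWT in
/-- for `k ≥ 2` and `v = s_{2k}·b`, every conjugate of `v^rev` that is
lexicographically strictly smaller than `x_{2k}·b·b·a` ends with the letter `b`. -/
theorem stmt12 (k : ℕ) (hk : 2 ≤ k) :
    ∀ i < ((fw (2*k) ++ [lb]).reverse).length,
      ((fw (2*k) ++ [lb]).reverse).rotate i < x (2*k) ++ [lb, lb, la] →
      (((fw (2*k) ++ [lb]).reverse).rotate i).getLast? = some lb := by
  obtain ⟨j, rfl⟩ : ∃ j, k = j + 2 := ⟨k - 2, by omega⟩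
  rw [show 2*(j+2) = 2*j+2+2 from by ring]
  intro i hi hlt
  set X := x (2*j+2+2) with hX
  have hXf : ∀ q (hq : q < X.length), X[q] = S12.f q := fun q hq => S12.x_getElem (2*j+2) q hq
  have hXlen3 : 3 ≤ X.length := by
    have h1 := S12.length_x (2*j+2)
    rw [← hX] at h1
    have h2 := S12.fib_big (2*j)
    have h3 : (2*j)+4 = (2*j+2)+2 := by ring
    rw [h3] at h2
    omega
  have hpal : X.reverse = X := by
    have := (S12.rev (2*j+2)).2
    rw [← hX] at this
    exact this
  have htl : S12.tl (2*j+2+1) = [lb, la] := by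
    have hmod : (2*j+2+1) % 2 = 1 := by omega
    simp [S12.tl, hmod]
  have hw : (fw (2*j+2+2) ++ [lb]).reverse = lb :: lb :: la :: X := by
    have hrev1 := (S12.rev (2*j+2)).1
    rw [← hX] at hrev1
    rw [List.reverse_append, hrev1, htl]
    rfl
  rw [hw] at hi hlt ⊢
  rw [List.rotate_eq_drop_append_take (le_of_lt hi)] at hlt ⊢
  rcases i with _ | _ | _ | _ | p <;>
    simp only [Nat.succ_eq_add_one, List.drop_succ_cons, List.take_succ_cons,
      List.drop_zero, List.take_zero, List.append_nil] at hlt ⊢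
  · -- i = 0 : contradiction
    have h0 : 0 < X.length := by omega
    have hXsplit : X = la :: X.drop 1 := by
      conv_lhs => rw [← @List.drop_zero _ X]
      rw [List.drop_eq_getElem_cons h0, hXf 0 h0, S12.f_zero]
    have hlt2 : X ++ [lb,lb,la] < lb :: lb :: la :: X := by
      nth_rewrite 1 [hXsplit]
      exact List.Lex.rel (by decide)
    exact absurd hlt (lt_asymm hlt2)
  · -- i = 1
    rw [List.getLast?_append]; rfl
  · -- i = 2
    rw [List.getLast?_append]; rfl
  · -- i = 3 : rotation equals the bound itself
    exact absurd hlt (lt_irrefl _)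
  · -- i = p + 4
    have hp1 : p + 1 < X.length := by simp only [List.length_cons] at hi; omega
    have hp0 : p < X.length := by omega
    -- the last element of the rotation is X[p]
    have hT : (X.take (p+1)).getLast? = some (X[p]'hp0) := by
      rw [List.getLast?_eq_getElem?]
      have hlt' : (X.take (p+1)).length = p+1 := by rw [List.length_take]; omega
      rw [hlt']
      simp only [Nat.add_sub_cancel]
      rw [List.getElem?_take, if_pos (by omega)]
      exact List.getElem?_eq_getElem hp0
    have hgl : (X.drop (p+1) ++ (lb::lb::la::X.take (p+1))).getLast? = some (X[p]'hp0) := by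
      rw [List.getLast?_append,
        show (lb::lb::la::X.take (p+1)) = [lb,lb,la] ++ X.take (p+1) from rfl,
        List.getLast?_append, hT]
      rfl
    rw [hgl]
    rcases Bool.eq_false_or_eq_true (X[p]'hp0) with hxp | hxp
    · rw [hxp]
    · -- X[p] = la : derive a contradiction with hlt
      exfalso
      have hfp : S12.f p = la := by rw [← hXf p hp0]; exact hxp
      obtain ⟨j₀, hag, hja, hjb⟩ := S12.key p hfp
      rcases lt_or_ge j₀ (X.length - (p+1)) with hjm | hjm
      · -- strict difference within the overlap
        have hj0X : j₀ < X.length := by omega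
        have hpj : p+1+j₀ < X.length := by omega
        have hA : (X.drop (p+1)).take j₀ = X.take j₀ := by
          apply List.ext_getElem
          · rw [List.length_take, List.length_take, List.length_drop]; omega
          · intro q h1 h2
            have hq : q < j₀ := by
              rw [List.length_take] at h2; omega
            rw [List.getElem_take, List.getElem_take, List.getElem_drop]
            rw [hXf (p+1+q) (by omega), hXf q (by omega)]
            exact hag q hq
        have hXsplit : X = X.take j₀ ++ (la :: X.drop (j₀+1)) := by
          conv_lhs => rw [← List.take_append_drop j₀ X]
          rw [List.drop_eq_getElem_cons hj0X, hXf j₀ hj0X, hja]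
        have hDsplit : X.drop (p+1) = X.take j₀ ++ (lb :: X.drop (p+1+j₀+1)) := by
          conv_lhs => rw [← List.take_append_drop j₀ (X.drop (p+1))]
          rw [hA, List.drop_drop, List.drop_eq_getElem_cons hpj, hXf (p+1+j₀) hpj, hjb]
        have hlt2 : (X.take j₀ ++ (la :: X.drop (j₀+1))) ++ [lb,lb,la]
            < (X.take j₀ ++ (lb :: X.drop (p+1+j₀+1))) ++ (lb::lb::la::X.take (p+1)) := by
          rw [List.append_assoc, List.append_assoc]
          exact S12.lex_append _ (List.Lex.rel (by decide))
        rw [← hXsplit, ← hDsplit] at hlt2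
        exact absurd hlt (lt_asymm hlt2)
      · -- the overlap coincides: compare the remainders
        set m := X.length - (p+1) with hm
        have hmlt : m < X.length := by omega
        have hB : X.drop (p+1) = X.take m := by
          apply List.ext_getElem
          · rw [List.length_drop, List.length_take]; omega
          · intro q h1 h2
            have hq : q < m := by rw [List.length_drop] at h1; omega
            rw [List.getElem_drop, List.getElem_take]
            rw [hXf (p+1+q) (by omega), hXf q (by omega)]
            exact hag q (by omega)
        have hlast : X[X.length - 1]'(by omega) = la := by
          have h1 : X.getLast? = X.head? := by
            conv_lhs => rw [← hpal]
            exact List.getLast?_reverse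
          rw [List.getLast?_eq_getElem?, List.head?_eq_getElem?] at h1
          rw [List.getElem?_eq_getElem (show X.length - 1 < X.length from by omega),
            List.getElem?_eq_getElem (show 0 < X.length from by omega)] at h1
          rw [Option.some_inj] at h1
          rw [h1, hXf 0 (by omega)]
          exact S12.f_zero
        rcases Bool.eq_false_or_eq_true (X[m]'hmlt) with hxm | hxm
        · -- X[m] = b : then X[m+1] = a
          have hm1 : m + 1 < X.length := by
            rcases Nat.lt_or_ge (m+1) X.length with h | h
            · exact h
            · exfalso
              have hfm : S12.f m = lb := by rw [← hXf m hmlt]; exact hxm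
              have hfl : S12.f (X.length - 1) = la := by
                rw [← hXf _ (by omega)]; exact hlast
              rw [show m = X.length - 1 from by omega] at hfm
              rw [hfm] at hfl
              exact absurd hfl (by decide)
          have hXm1 : X[m+1]'hm1 = la := by
            rw [hXf (m+1) hm1]
            exact S12.f_succ_of_b m (by rw [← hXf m hmlt]; exact hxm)
          have hXsplit : X = X.take m ++ (lb :: la :: X.drop (m+2)) := by
            conv_lhs => rw [← List.take_append_drop m X]
            rw [List.drop_eq_getElem_cons hmlt, hxm,
              List.drop_eq_getElem_cons hm1, hXm1]
          have hlt2 : X ++ [lb,lb,la] < X.drop (p+1) ++ (lb::lb::la::X.take (p+1)) := by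
            rw [hB]
            conv_lhs => rw [hXsplit]
            rw [List.append_assoc]
            exact S12.lex_append _ (List.Lex.cons (List.Lex.rel (by decide)))
          exact absurd hlt (lt_asymm hlt2)
        · -- X[m] = a
          have hXsplit : X = X.take m ++ (la :: X.drop (m+1)) := by
            conv_lhs => rw [← List.take_append_drop m X]
            rw [List.drop_eq_getElem_cons hmlt, hxm]
          have hlt2 : X ++ [lb,lb,la] < X.drop (p+1) ++ (lb::lb::la::X.take (p+1)) := by
            rw [hB]
            conv_lhs => rw [hXsplit]
            rw [List.append_assoc]
            exact S12.lex_append _ (List.Lex.rel (by decide))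
          exact absurd hlt (lt_asymm hlt2)
end
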